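/- arXiv:1705.02697 — 2 statements merged into one kernel-verified Lean document; each statement's English description precedes it below -/
import Mathlib

section
/- Let φ : M → M' be an R-module epimorphism and N a submodule of M containing ker φ. If β(N) = ⟨E_M(N)⟩, then β(φ(N)) = ⟨E_{M'}(φ(N))⟩. -/
/-- A submodule `P` is completely prime if it is proper and `a • m ∈ P` implies
`m ∈ P` or `a • M ⊆ P`. -/
def IsCompletelyPrimeSubmodule {R : Type*} [Ring R] {M : Type*} [AddCommGroup M] [Module R M]
    (P : Submodule R M) : Prop :=
  P ≠ ⊤ ∧ ∀ (a : R) (m : M), a • m ∈ P → m ∈ P ∨ ∀ x : M, a • x ∈ P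

/-- A submodule `P` is prime if it is proper and for every two-sided ideal `A` of `R`
and submodule `N`, `A N ⊆ P` implies `N ⊆ P` or `A M ⊆ P`. -/
def IsPrimeSubmodule {R : Type*} [Ring R] {M : Type*} [AddCommGroup M] [Module R M]
    (P : Submodule R M) : Prop :=
  P ≠ ⊤ ∧ ∀ (A : TwoSidedIdeal R) (N : Submodule R M),
    (∀ a ∈ A, ∀ n ∈ N, a • n ∈ P) → N ≤ P ∨ ∀ a ∈ A, ∀ x : M, a • x ∈ P

/-- The prime radical `β(N)`: the intersection of all prime submodules containing `N`
(equal to `⊤ = M` if there are none). -/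
def primeRadical {R : Type*} [Ring R] {M : Type*} [AddCommGroup M] [Module R M]
    (N : Submodule R M) : Submodule R M :=
  sInf {P | IsPrimeSubmodule P ∧ N ≤ P}

/-- The completely prime radical `β_co(N)`: the intersection of all completely prime
submodules containing `N` (equal to `⊤ = M` if there are none). -/
def cpRadical {R : Type*} [Ring R] {M : Type*} [AddCommGroup M] [Module R M]
    (N : Submodule R M) : Submodule R M :=
  sInf {P | IsCompletelyPrimeSubmodule P ∧ N ≤ P}

/-- The envelope `E_M(N) = {r • m : r^k • m ∈ N for some positive integer k}`. -/
def envelope {R : Type*} [Ring R] {M : Type*} [AddCommGroup M] [Module R M]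
    (N : Submodule R M) : Set M :=
  {x | ∃ (r : R) (m : M) (k : ℕ), 0 < k ∧ r ^ k • m ∈ N ∧ x = r • m}

/-- A submodule `N` is completely semiprime if `a ^ 2 • m ∈ N` implies `a • m ∈ N`. -/
def IsCompletelySemiprimeSubmodule {R : Type*} [Ring R] {M : Type*} [AddCommGroup M]
    [Module R M] (N : Submodule R M) : Prop :=
  ∀ (a : R) (m : M), a ^ 2 • m ∈ N → a • m ∈ N

section Aux
variable {R : Type*} [Ring R] {M M' : Type*} [AddCommGroup M]
    [Module R M] [AddCommGroup M'] [Module R M'] (φ : M →ₗ[R] M')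

variable {R : Type*} [Ring R] {M M' : Type*} [AddCommGroup M]
    [Module R M] [AddCommGroup M'] [Module R M'] (φ : M →ₗ[R] M')

lemma prime_comap (hsurj : Function.Surjective φ) {P' : Submodule R M'}
    (hP' : IsPrimeSubmodule P') : IsPrimeSubmodule (P'.comap φ) := by
  obtain ⟨hne, hp⟩ := hP'
  constructor
  · intro htop
    apply hne
    rw [eq_top_iff]
    intro x _
    obtain ⟨y, rfl⟩ := hsurj x
    have : y ∈ P'.comap φ := htop ▸ Submodule.mem_top
    exact this
  · intro A K hAK
    rcases hp A (K.map φ) (by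
      rintro a ha n ⟨m, hm, rfl⟩
      have := hAK a ha m hm
      simpa using this) with h1 | h1
    · left
      intro x hx
      exact h1 ⟨x, hx, rfl⟩
    · right
      intro a ha x
      simpa using h1 a ha (φ x)

lemma prime_map (hsurj : Function.Surjective φ) {P : Submodule R M}
    (hP : IsPrimeSubmodule P) (hker : LinearMap.ker φ ≤ P) :
    IsPrimeSubmodule (P.map φ) := by
  obtain ⟨hne, hp⟩ := hP
  have hcm : (P.map φ).comap φ = P := by
    rw [Submodule.comap_map_eq, sup_eq_left.mpr hker]
  constructor
  · intro htop
    apply hne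
    rw [← hcm, htop, Submodule.comap_top]
  · intro A K' hAK
    rcases hp A (K'.comap φ) (by
      intro a ha n hn
      rw [← hcm]
      have := hAK a ha (φ n) hn
      simpa using this) with h1 | h1
    · left
      rw [← Submodule.map_comap_eq_of_surjective hsurj K']
      exact Submodule.map_mono h1
    · right
      intro a ha x
      obtain ⟨y, rfl⟩ := hsurj x
      rw [← map_smul]
      exact ⟨a • y, h1 a ha y, rfl⟩


lemma le_primeRadical (N : Submodule R M) : N ≤ primeRadical N :=
  le_sInf fun _ hP => hP.2

lemma env_map (φ : M →ₗ[R] M') (hsurj : Function.Surjective φ) (N : Submodule R M)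
    (hker : LinearMap.ker φ ≤ N) :
    envelope (N.map φ) = φ '' envelope N := by
  ext x
  constructor
  · rintro ⟨r, m', k, hk, hmem, rfl⟩
    obtain ⟨m, rfl⟩ := hsurj m'
    obtain ⟨n, hn, hnn⟩ := hmem
    have hk1 : r ^ k • m - n ∈ LinearMap.ker φ := by
      simp [LinearMap.mem_ker, map_sub, hnn, sub_eq_zero]
    have hN : r ^ k • m ∈ N := by
      have := N.add_mem (hker hk1) hn
      simpa using this
    exact ⟨r • m, ⟨r, m, k, hk, hN, rfl⟩, map_smul φ r m⟩
  · rintro ⟨y, ⟨r, m, k, hk, hm, rfl⟩, rfl⟩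
    exact ⟨r, φ m, k, hk, ⟨r ^ k • m, hm, by simp⟩, by simp⟩

lemma radical_map (φ : M →ₗ[R] M') (hsurj : Function.Surjective φ) (N : Submodule R M)
    (hker : LinearMap.ker φ ≤ N) :
    primeRadical (N.map φ) = (primeRadical N).map φ := by
  apply le_antisymm
  · have hcomap : (primeRadical (N.map φ)).comap φ ≤ primeRadical N := by
      apply le_sInf
      rintro P ⟨hP, hNP⟩
      have hkerP : LinearMap.ker φ ≤ P := hker.trans hNP
      have hmp : IsPrimeSubmodule (P.map φ) := prime_map φ hsurj hP hkerP
      have h1 : primeRadical (N.map φ) ≤ P.map φ :=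
        sInf_le ⟨hmp, Submodule.map_mono hNP⟩
      calc (primeRadical (N.map φ)).comap φ ≤ (P.map φ).comap φ :=
            Submodule.comap_mono h1
        _ = P := by rw [Submodule.comap_map_eq, sup_eq_left.mpr hkerP]
    calc primeRadical (N.map φ)
        = ((primeRadical (N.map φ)).comap φ).map φ :=
          (Submodule.map_comap_eq_of_surjective hsurj _).symm
      _ ≤ (primeRadical N).map φ := Submodule.map_mono hcomap
  · apply le_sInf
    rintro P' ⟨hP', hNP'⟩
    have hc : IsPrimeSubmodule (P'.comap φ) := prime_comap φ hsurj hP'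
    have hNc : N ≤ P'.comap φ := (Submodule.le_comap_map φ N).trans
      (Submodule.comap_mono hNP')
    have : primeRadical N ≤ P'.comap φ := sInf_le ⟨hc, hNc⟩
    exact (Submodule.map_mono this).trans (Submodule.map_comap_le φ P')

end Aux

/-- (McCasland–Moore) if `φ : M → M'` is an epimorphism, `ker φ ⊆ N` and
`β(N) = ⟨E_M(N)⟩`, then `β(φ(N)) = ⟨E_{M'}(φ(N))⟩`. -/
theorem radical_formula_map {R : Type*} [Ring R] {M M' : Type*} [AddCommGroup M]
    [Module R M] [AddCommGroup M'] [Module R M'] (φ : M →ₗ[R] M')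
    (hsurj : Function.Surjective φ) (N : Submodule R M)
    (hker : LinearMap.ker φ ≤ N)
    (h : primeRadical N = Submodule.span R (envelope N)) :
    primeRadical (N.map φ) = Submodule.span R (envelope (N.map φ)) := by
  rw [radical_map φ hsurj N hker, env_map φ hsurj N hker, Submodule.span_image, h]
end

section
/- If a submodule N of an R-module M is 2-primal and β_co(N) ⊆ ⟨E_M(N)⟩, then the zero submodule of M/N satisfies the radical formula: β(M/N) = ⟨E_{M/N}(0)⟩. -/
lemma envelope_subset_of_cp {R : Type*} [Ring R] {M : Type*} [AddCommGroup M] [Module R M]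
    {N P : Submodule R M} (hP : IsCompletelyPrimeSubmodule P) (hNP : N ≤ P) :
    envelope N ⊆ P := by
  rintro x ⟨r, m, k, hk, hmem, rfl⟩
  have key : ∀ k, 0 < k → r ^ k • m ∈ P → r • m ∈ P := by
    intro k
    induction k with
    | zero => intro h; exact absurd h (lt_irrefl 0)
    | succ n ih =>
      intro _ h
      rcases Nat.eq_zero_or_pos n with hn | hn
      · subst hn; simpa using h
      · have h' : r • (r ^ n • m) ∈ P := by
          rwa [smul_smul, ← pow_succ']
        rcases hP.2 r (r ^ n • m) h' with h1 | h2
        · exact ih hn h1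
        · exact h2 m
  exact key k hk (hNP hmem)

lemma span_envelope_le_cpRadical {R : Type*} [Ring R] {M : Type*} [AddCommGroup M]
    [Module R M] (N : Submodule R M) :
    Submodule.span R (envelope N) ≤ cpRadical N := by
  apply le_sInf
  rintro P ⟨hP, hNP⟩
  exact Submodule.span_le.2 (envelope_subset_of_cp hP hNP)

/-- if `N` is 2-primal and `β_co(N) ⊆ ⟨E_M(N)⟩`, then the zero submodule of
`M/N` satisfies the radical formula. -/
theorem radical_formula_quotient_of_twoPrimal {R : Type*} [Ring R] {M : Type*}
    [AddCommGroup M] [Module R M] (N : Submodule R M)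
    (h2p : cpRadical (⊥ : Submodule R (M ⧸ N)) = primeRadical (⊥ : Submodule R (M ⧸ N)))
    (hco : cpRadical N ≤ Submodule.span R (envelope N)) :
    primeRadical (⊥ : Submodule R (M ⧸ N)) =
      Submodule.span R (envelope (⊥ : Submodule R (M ⧸ N))) := by
  rw [← h2p]
  apply le_antisymm
  · intro y hy
    obtain ⟨x, rfl⟩ := N.mkQ_surjective y
    have hx : x ∈ cpRadical N := by
      apply Submodule.mem_sInf.2
      rintro Q ⟨hQ, hNQ⟩
      have hmap : IsCompletelyPrimeSubmodule (Q.map N.mkQ) := by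
        constructor
        · intro htop
          apply hQ.1
          rw [Submodule.eq_top_iff']
          intro m
          have : N.mkQ m ∈ Q.map N.mkQ := htop ▸ Submodule.mem_top
          obtain ⟨z, hz, hzx⟩ := this
          have hzm : z - m ∈ N := by
            rwa [← Submodule.Quotient.eq]
          have : m = z - (z - m) := by abel
          rw [this]
          exact Q.sub_mem hz (hNQ hzm)
        · intro a mb hmem
          obtain ⟨m, rfl⟩ := N.mkQ_surjective mb
          have ham : a • m ∈ Q := by
            rw [show a • N.mkQ m = N.mkQ (a • m) from (map_smul N.mkQ a m).symm] at hmem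
            obtain ⟨z, hz, hzx⟩ := hmem
            have hzm : z - a • m ∈ N := by rwa [← Submodule.Quotient.eq]
            have : a • m = z - (z - a • m) := by abel
            rw [this]
            exact Q.sub_mem hz (hNQ hzm)
          rcases hQ.2 a m ham with h1 | h2
          · exact Or.inl ⟨m, h1, rfl⟩
          · refine Or.inr fun xb => ?_
            obtain ⟨xm, rfl⟩ := N.mkQ_surjective xb
            rw [show a • N.mkQ xm = N.mkQ (a • xm) from (map_smul N.mkQ a xm).symm]
            exact ⟨a • xm, h2 xm, rfl⟩
      have hmem : N.mkQ x ∈ Q.map N.mkQ :=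
        Submodule.mem_sInf.1 hy _ ⟨hmap, bot_le⟩
      obtain ⟨z, hz, hzx⟩ := hmem
      have hzm : z - x ∈ N := by rwa [← Submodule.Quotient.eq]
      have : x = z - (z - x) := by abel
      rw [this]
      exact Q.sub_mem hz (hNQ hzm)
    have hx' : x ∈ Submodule.span R (envelope N) := hco hx
    have himg : N.mkQ x ∈ Submodule.map N.mkQ (Submodule.span R (envelope N)) :=
      Submodule.mem_map_of_mem hx'
    rw [Submodule.map_span] at himg
    refine Submodule.span_mono ?_ himg
    rintro _ ⟨w, ⟨r, m, k, hk, hw, rfl⟩, rfl⟩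
    refine ⟨r, N.mkQ m, k, hk, ?_, (map_smul N.mkQ r m)⟩
    refine (Submodule.mem_bot R).2 ?_
    rw [show r ^ k • N.mkQ m = N.mkQ (r ^ k • m) from (map_smul N.mkQ (r ^ k) m).symm,
      N.mkQ_apply, Submodule.Quotient.mk_eq_zero]
    exact hw
  · exact span_envelope_le_cpRadical _
end
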